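/- There is an absolute constant c > 0 such that for every positive integer n, the number of sum-free subsets S of the integer interval [1, n] whose least element is greater than n/3 (i.e., every element s ∈ S satisfies 3s > n) does not exceed c · 2^{n/2}. -/

import Mathlib

open Finset

namespace CE5

attribute [local instance low] Classical.propDecidable

section Key

variable (d : ℤ)

def gP (P L : Finset ℤ) : ℕ := (L.filter (fun x => x + d ∈ P ∧ x + d ∉ L)).card
noncomputable def wt (P L : Finset ℤ) : ℝ := (1/2 : ℝ) ^ (L.card + gP d P L)
noncomputable def Phi (P : Finset ℤ) : ℝ := ∑ L ∈ P.powerset, wt d P L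
noncomputable def AuxSum (v : ℤ) (Q : Finset ℤ) : ℝ :=
  ∑ L ∈ Q.powerset, wt d (insert v Q) (insert v L)
def tops (P : Finset ℤ) : ℕ := (P.filter (fun x => x + d ∉ P)).card
noncomputable def Bb (P : Finset ℤ) : ℝ := (9/8 : ℝ) ^ (tops d P) * (4/3 : ℝ) ^ (P.card)

lemma wt_nonneg (P L : Finset ℤ) : 0 ≤ wt d P L := by unfold wt; positivity
lemma Phi_nonneg (P : Finset ℤ) : 0 ≤ Phi d P :=
  Finset.sum_nonneg fun L _ => wt_nonneg d P L
lemma Bb_pos (P : Finset ℤ) : 0 < Bb d P := by unfold Bb; positivity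

variable {d}
variable (hd : 0 < d)
include hd

lemma lemA {v : ℤ} {Q L : Finset ℤ} (hvd : v - d ∉ Q) (hL : L ⊆ Q) :
    wt d (insert v Q) L = wt d Q L := by
  unfold wt
  congr 2
  unfold gP
  congr 1
  apply Finset.filter_congr
  intro x hx
  have hxQ : x ∈ Q := hL hx
  have hxv : x + d ≠ v := by
    intro h
    apply hvd
    have : x = v - d := by omega
    rwa [this] at hxQ
  simp [Finset.mem_insert, hxv]

lemma lemB {v : ℤ} {Q L : Finset ℤ} (hvQ : v ∉ Q) (hvd : v - d ∉ Q) (hL : L ⊆ Q) :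
    wt d (insert v Q) (insert v L) =
      (1/2 : ℝ) * (if v + d ∈ Q ∧ v + d ∉ L then (1/2 : ℝ) else 1) * wt d Q L := by
  have hvL : v ∉ L := fun h => hvQ (hL h)
  have hcard : (insert v L).card = L.card + 1 := Finset.card_insert_of_notMem hvL
  have hvdv : v + d ≠ v := by omega
  have hg : gP d (insert v Q) (insert v L) =
      gP d Q L + (if v + d ∈ Q ∧ v + d ∉ L then 1 else 0) := by
    unfold gP
    rw [Finset.filter_insert]
    have hcong : (L.filter (fun x => x + d ∈ insert v Q ∧ x + d ∉ insert v L)) =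
        (L.filter (fun x => x + d ∈ Q ∧ x + d ∉ L)) := by
      apply Finset.filter_congr
      intro x hx
      have hxQ : x ∈ Q := hL hx
      have hxv : x + d ≠ v := by
        intro h
        apply hvd
        have : x = v - d := by omega
        rwa [this] at hxQ
      simp [Finset.mem_insert, hxv]
    by_cases hcase : v + d ∈ Q ∧ v + d ∉ L
    · have hpred : (v + d ∈ insert v Q ∧ v + d ∉ insert v L) := by
        refine ⟨Finset.mem_insert_of_mem hcase.1, ?_⟩
        simp only [Finset.mem_insert, not_or]
        exact ⟨hvdv, hcase.2⟩
      rw [if_pos hpred, if_pos hcase]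
      rw [Finset.card_insert_of_notMem, hcong]
      intro hmem
      exact hvL (Finset.mem_of_mem_filter _ hmem)
    · have hpred : ¬ (v + d ∈ insert v Q ∧ v + d ∉ insert v L) := by
        intro ⟨h1, h2⟩
        apply hcase
        refine ⟨?_, fun hL2 => h2 (Finset.mem_insert_of_mem hL2)⟩
        rcases Finset.mem_insert.1 h1 with h | h
        · exact absurd h hvdv
        · exact h
      rw [if_neg hpred, if_neg hcase, hcong, add_zero]
  unfold wt
  rw [hcard, hg]
  by_cases hcase : v + d ∈ Q ∧ v + d ∉ L
  · rw [if_pos hcase, if_pos hcase]; ring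
  · rw [if_neg hcase, if_neg hcase]; ring

lemma tops_congr_erase {v : ℤ} {Q : Finset ℤ} (hvd : v - d ∉ Q) :
    Q.filter (fun x => x + d ∉ insert v Q) = Q.filter (fun x => x + d ∉ Q) := by
  apply Finset.filter_congr
  intro x hxQ
  have hxv : x + d ≠ v := by
    intro h
    apply hvd
    have : x = v - d := by omega
    rwa [this] at hxQ
  simp [Finset.mem_insert, hxv]

lemma tops_insert_of_mem {v : ℤ} {Q : Finset ℤ} (hvd : v - d ∉ Q) (hw : v + d ∈ Q) :
    tops d (insert v Q) = tops d Q := by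
  unfold tops
  rw [Finset.filter_insert, if_neg (by simp [Finset.mem_insert_of_mem hw]),
    tops_congr_erase hd hvd]

lemma tops_insert_of_not_mem {v : ℤ} {Q : Finset ℤ} (hvQ : v ∉ Q) (hvd : v - d ∉ Q)
    (hw : v + d ∉ Q) : tops d (insert v Q) = tops d Q + 1 := by
  unfold tops
  have hvdv : v + d ≠ v := by omega
  rw [Finset.filter_insert, if_pos (by simp [Finset.mem_insert, hvdv, hw]),
    tops_congr_erase hd hvd, Finset.card_insert_of_notMem]
  intro hmem
  exact hvQ (Finset.mem_of_mem_filter _ hmem)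

lemma Bb_insert_of_mem {v : ℤ} {Q : Finset ℤ} (hvQ : v ∉ Q) (hvd : v - d ∉ Q)
    (hw : v + d ∈ Q) : Bb d (insert v Q) = (4/3 : ℝ) * Bb d Q := by
  unfold Bb
  rw [tops_insert_of_mem hd hvd hw, Finset.card_insert_of_notMem hvQ, pow_succ]
  ring

lemma Bb_insert_of_not_mem {v : ℤ} {Q : Finset ℤ} (hvQ : v ∉ Q) (hvd : v - d ∉ Q)
    (hw : v + d ∉ Q) : Bb d (insert v Q) = (3/2 : ℝ) * Bb d Q := by
  unfold Bb
  rw [tops_insert_of_not_mem hd hvQ hvd hw, Finset.card_insert_of_notMem hvQ,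
    pow_succ, pow_succ]
  ring

/-- The key induction. -/
lemma key : ∀ N : ℕ,
    (∀ P : Finset ℤ, P.card = N → Phi d P ≤ Bb d P) ∧
    (∀ v : ℤ, ∀ Q : Finset ℤ, Q.card + 1 = N → v ∉ Q → v - d ∉ Q → v + d ∈ Q →
      AuxSum d v Q ≤ (1/4 : ℝ) * Bb d (insert v Q)) := by
  intro N
  induction N using Nat.strong_induction_on with
  | _ N IH =>
  have aux : ∀ v : ℤ, ∀ Q : Finset ℤ, Q.card + 1 = N → v ∉ Q → v - d ∉ Q → v + d ∈ Q →
      AuxSum d v Q ≤ (1/4 : ℝ) * Bb d (insert v Q) := by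
    intro v Q hN hvQ hvd hw
    set w := v + d with hwdef
    -- rewrite AuxSum via lemB
    have step1 : AuxSum d v Q =
        (1/4 : ℝ) * Phi d Q + (1/4 : ℝ) * ∑ L ∈ Q.powerset, (if w ∈ L then wt d Q L else 0) := by
      unfold AuxSum Phi
      rw [Finset.mul_sum, Finset.mul_sum, ← Finset.sum_add_distrib]
      apply Finset.sum_congr rfl
      intro L hL
      rw [lemB hd hvQ hvd (Finset.mem_powerset.1 hL)]
      by_cases hcase : w ∈ L
      · rw [if_neg (by simp [← hwdef, hcase]), if_pos hcase]; ring
      · rw [if_pos ⟨hw, hcase⟩, if_neg hcase]; ring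
    -- the second sum is AuxSum d w R with R = Q.erase w
    set R := Q.erase w with hRdef
    have hwR : w ∉ R := Finset.notMem_erase _ _
    have hQR : insert w R = Q := Finset.insert_erase hw
    have hvR : w - d ∉ R := by
      have : w - d = v := by omega
      rw [this]
      intro hmem
      exact hvQ (Finset.erase_subset _ _ hmem)
    have step2 : ∑ L ∈ Q.powerset, (if w ∈ L then wt d Q L else 0) = AuxSum d w R := by
      unfold AuxSum
      rw [← hQR, Finset.sum_powerset_insert hwR]
      have h1 : ∑ L ∈ R.powerset, (if w ∈ L then wt d (insert w R) L else 0) = 0 := by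
        apply Finset.sum_eq_zero
        intro L hL
        rw [if_neg (fun hc => hwR (Finset.mem_powerset.1 hL hc))]
      have h2 : ∀ L ∈ R.powerset,
          (if w ∈ insert w L then wt d (insert w R) (insert w L) else 0)
            = wt d (insert w R) (insert w L) := by
        intro L _
        rw [if_pos (Finset.mem_insert_self _ _)]
      rw [Finset.sum_congr rfl h2, h1, zero_add]
    have hRcard : R.card + 1 = Q.card := by
      rw [← hQR, Finset.card_insert_of_notMem hwR]
    have hQN : Q.card = N - 1 ∧ 1 ≤ N := ⟨by omega, by omega⟩
    have hPhiQ : Phi d Q ≤ Bb d Q := (IH (N-1) (by omega)).1 Q (by omega)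
    have hBbP : Bb d (insert v Q) = (4/3 : ℝ) * Bb d Q := Bb_insert_of_mem hd hvQ hvd hw
    by_cases hwd : w + d ∈ R
    · -- use aux IH
      have haux : AuxSum d w R ≤ (1/4 : ℝ) * Bb d (insert w R) :=
        (IH (N-1) (by omega)).2 w R (by omega) hwR hvR hwd
      rw [hQR] at haux
      have hBQ : (0:ℝ) < Bb d Q := Bb_pos d Q
      rw [step1, step2, hBbP]
      nlinarith [haux, hPhiQ]
    · -- w is a top of Q
      have hwdQ : w + d ∉ Q := by
        intro hc
        apply hwd
        rw [hRdef, Finset.mem_erase]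
        exact ⟨by omega, hc⟩
      have step3 : AuxSum d w R = (1/2 : ℝ) * Phi d R := by
        unfold AuxSum Phi
        rw [Finset.mul_sum]
        apply Finset.sum_congr rfl
        intro L hL
        rw [lemB hd hwR hvR (Finset.mem_powerset.1 hL)]
        rw [if_neg (by rintro ⟨hc, -⟩; exact hwdQ (Finset.erase_subset _ _ hc))]
        ring
      have hPhiR : Phi d R ≤ Bb d R := (IH (N-2) (by omega)).1 R (by omega)
      have hBbQ : Bb d Q = (3/2 : ℝ) * Bb d R := by
        rw [← hQR]
        exact Bb_insert_of_not_mem hd hwR hvR hwd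
      have hBR : (0:ℝ) < Bb d R := Bb_pos d R
      rw [step1, step2, step3, hBbP, hBbQ]
      nlinarith [hPhiQ, hPhiR, hBbQ]
  refine ⟨?_, aux⟩
  intro P hP
  rcases Finset.eq_empty_or_nonempty P with rfl | hne
  · unfold Phi
    rw [Finset.powerset_empty, Finset.sum_singleton]
    unfold wt Bb gP tops
    simp
  · set v := P.min' hne with hvdef
    have hv : v ∈ P := P.min'_mem hne
    set Q := P.erase v with hQdef
    have hvQ : v ∉ Q := Finset.notMem_erase _ _
    have hPeq : insert v Q = P := Finset.insert_erase hv
    have hvd : v - d ∉ Q := by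
      intro hmem
      have h1 : v - d ∈ P := Finset.erase_subset _ _ hmem
      have h2 : v ≤ v - d := P.min'_le _ h1
      omega
    have hcard : Q.card + 1 = N := by
      rw [← hP, ← hPeq, Finset.card_insert_of_notMem hvQ]
    have hsplit : Phi d P = Phi d Q + AuxSum d v Q := by
      unfold Phi AuxSum
      rw [← hPeq, Finset.sum_powerset_insert hvQ]
      congr 1
      apply Finset.sum_congr rfl
      intro L hL
      exact lemA hd hvd (Finset.mem_powerset.1 hL)
    have hPhiQ : Phi d Q ≤ Bb d Q := (IH (N-1) (by omega)).1 Q (by omega)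
    by_cases hw : v + d ∈ Q
    · have haux : AuxSum d v Q ≤ (1/4 : ℝ) * Bb d (insert v Q) :=
        aux v Q hcard hvQ hvd hw
      rw [hPeq] at haux
      have hBbP : Bb d P = (4/3 : ℝ) * Bb d Q := by
        rw [← hPeq]; exact Bb_insert_of_mem hd hvQ hvd hw
      rw [hsplit, hBbP]
      have hBQ : (0:ℝ) < Bb d Q := Bb_pos d Q
      nlinarith [haux, hPhiQ, hBbP]
    · have hwP : v + d ∉ P := by
        rw [← hPeq]
        simp only [Finset.mem_insert, not_or]
        exact ⟨by omega, hw⟩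
      have step3 : AuxSum d v Q = (1/2 : ℝ) * Phi d Q := by
        unfold AuxSum Phi
        rw [Finset.mul_sum]
        apply Finset.sum_congr rfl
        intro L hL
        rw [lemB hd hvQ hvd (Finset.mem_powerset.1 hL)]
        rw [if_neg (by rintro ⟨hc, -⟩; exact hw hc)]
        ring
      have hBbP : Bb d P = (3/2 : ℝ) * Bb d Q := by
        rw [← hPeq]
        exact Bb_insert_of_not_mem hd hvQ hvd hw
      rw [hsplit, step3, hBbP]
      nlinarith [hPhiQ, Bb_pos d Q]


end Key

lemma key_bound {d : ℤ} (hd : 0 < d) (P : Finset ℤ) : Phi d P ≤ Bb d P :=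
  (key hd P.card).1 P rfl

/-- the compatibility condition between the low part `L` and the high part `H`. -/
def Cond (L H : Finset ℤ) : Prop :=
  (∀ j ∈ H, j ∉ L) ∧ (∀ i ∈ L, ∀ i' ∈ L, i + i' ∉ H)

/-- geometric sum helper -/
lemma sum_pow_le {r : ℝ} (h0 : 0 ≤ r) (h1 : r < 1) (a c : ℤ) (f : ℤ → ℕ) (B : ℕ)
    (hinj : ∀ s ∈ Finset.Icc a c, ∀ t ∈ Finset.Icc a c, f s = f t → s = t)
    (hB : ∀ s ∈ Finset.Icc a c, f s ≤ B) :
    ∑ s ∈ Finset.Icc a c, r ^ (f s) ≤ 1 / (1 - r) := by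
  have h2 : ∑ s ∈ Finset.Icc a c, r ^ f s = ∑ k ∈ (Finset.Icc a c).image f, r ^ k :=
    (Finset.sum_image hinj).symm
  rw [h2]
  have h3 : (Finset.Icc a c).image f ⊆ Finset.range (B + 1) := by
    intro k hk
    rw [Finset.mem_image] at hk
    obtain ⟨s, hs, rfl⟩ := hk
    exact Finset.mem_range.2 (Nat.lt_succ_of_le (hB s hs))
  have h4 : ∑ k ∈ (Finset.Icc a c).image f, r ^ k ≤ ∑ k ∈ Finset.range (B + 1), r ^ k :=
    Finset.sum_le_sum_of_subset_of_nonneg h3 (fun k _ _ => pow_nonneg h0 k)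
  have hg : (∑ i ∈ Finset.range (B + 1), r ^ i) * (r - 1) = r ^ (B + 1) - 1 :=
    geom_sum_mul r (B + 1)
  have hrp : (0:ℝ) ≤ r ^ (B + 1) := pow_nonneg h0 _
  have h5 : ∑ k ∈ Finset.range (B + 1), r ^ k ≤ 1 / (1 - r) := by
    rw [le_div_iff₀ (by linarith)]
    nlinarith [hg, hrp]
  linarith

/-- per-fiber bound on the number of valid `H` -/
lemma fiber_elem (m ℓ1 : ℤ) (hℓ : ℓ1 ∈ Finset.Icc (1:ℤ) m) (L : Finset ℤ)
    (hLM : L ⊆ Finset.Icc (1:ℤ) m) (hmin : L.min = (ℓ1 : WithTop ℤ)) :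
    (((Finset.Icc (1:ℤ) m).powerset.filter (fun H => Cond L H)).card : ℝ)
      ≤ 2 ^ (m.toNat) * wt ℓ1 (Finset.Icc ℓ1 m) L := by
  have hℓ1 : 1 ≤ ℓ1 := (Finset.mem_Icc.1 hℓ).1
  have hℓm : ℓ1 ≤ m := (Finset.mem_Icc.1 hℓ).2
  have hℓL : ℓ1 ∈ L := Finset.mem_of_min hmin
  have hLlow : ∀ x ∈ L, ℓ1 ≤ x := by
    intro x hx
    have := Finset.min_le hx
    rw [hmin] at this
    exact_mod_cast this
  set M := Finset.Icc (1:ℤ) m with hM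
  set gain := ((L.filter (fun x => x + ℓ1 ∈ Finset.Icc ℓ1 m ∧ x + ℓ1 ∉ L)).image
      (fun x => x + ℓ1)) with hgain
  set G := L ∪ gain with hG
  have hGM : G ⊆ M := by
    intro x hx
    rcases Finset.mem_union.1 hx with hx | hx
    · exact hLM hx
    · rw [hgain, Finset.mem_image] at hx
      obtain ⟨y, hy, rfl⟩ := hx
      have := (Finset.mem_filter.1 hy).2.1
      rw [Finset.mem_Icc] at this ⊢
      omega
  have hsub : (M.powerset.filter (fun H => Cond L H)) ⊆ (M \ G).powerset := by
    intro H hH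
    rw [Finset.mem_filter, Finset.mem_powerset] at hH
    obtain ⟨hHM, hc1, hc2⟩ := hH
    rw [Finset.mem_powerset]
    intro x hx
    rw [Finset.mem_sdiff]
    refine ⟨hHM hx, ?_⟩
    intro hxG
    rcases Finset.mem_union.1 hxG with hxL | hxg
    · exact hc1 x hx hxL
    · rw [hgain, Finset.mem_image] at hxg
      obtain ⟨y, hy, rfl⟩ := hxg
      exact hc2 y (Finset.mem_of_mem_filter _ hy) ℓ1 hℓL hx
  have hdisj : Disjoint L gain := by
    rw [Finset.disjoint_right]
    intro z hz
    rw [hgain, Finset.mem_image] at hz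
    obtain ⟨y, hy, rfl⟩ := hz
    exact (Finset.mem_filter.1 hy).2.2
  have hginj : Set.InjOn (fun x => x + ℓ1) (L.filter (fun x => x + ℓ1 ∈ Finset.Icc ℓ1 m ∧ x + ℓ1 ∉ L)) := by
    intro a _ b _ h
    simpa using h
  have hGcard : G.card = L.card + gP ℓ1 (Finset.Icc ℓ1 m) L := by
    rw [hG, Finset.card_union_of_disjoint hdisj, hgain,
      Finset.card_image_of_injOn hginj]
    rfl
  have hMcard : M.card = m.toNat := by
    rw [hM, Int.card_Icc]
    congr 1
    omega
  have hGle : G.card ≤ m.toNat := by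
    rw [← hMcard]; exact Finset.card_le_card hGM
  have hcard1 : ((M.powerset.filter (fun H => Cond L H)).card : ℝ)
      ≤ 2 ^ ((M \ G).card) := by
    have := Finset.card_le_card hsub
    rw [Finset.card_powerset] at this
    exact_mod_cast this
  have hsd : (M \ G).card = m.toNat - G.card := by
    rw [Finset.card_sdiff_of_subset hGM, hMcard]
  rw [hsd, hGcard] at hcard1
  have hkm : L.card + gP ℓ1 (Finset.Icc ℓ1 m) L ≤ m.toNat := by
    rw [← hGcard]; exact hGle
  have heq : (2:ℝ) ^ (m.toNat - (L.card + gP ℓ1 (Finset.Icc ℓ1 m) L))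
      = 2 ^ (m.toNat) * (1/2 : ℝ) ^ (L.card + gP ℓ1 (Finset.Icc ℓ1 m) L) := by
    have h2 : (2:ℝ) ^ (m.toNat - (L.card + gP ℓ1 (Finset.Icc ℓ1 m) L))
        * 2 ^ (L.card + gP ℓ1 (Finset.Icc ℓ1 m) L) = 2 ^ (m.toNat) := by
      rw [← pow_add, Nat.sub_add_cancel hkm]
    have h3 : (0:ℝ) < 2 ^ (L.card + gP ℓ1 (Finset.Icc ℓ1 m) L) := by positivity
    rw [one_div, inv_pow]
    field_simp
    linarith [h2]
  calc ((M.powerset.filter (fun H => Cond L H)).card : ℝ)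
      ≤ 2 ^ (m.toNat - (L.card + gP ℓ1 (Finset.Icc ℓ1 m) L)) := hcard1
    _ = 2 ^ (m.toNat) * (1/2 : ℝ) ^ (L.card + gP ℓ1 (Finset.Icc ℓ1 m) L) := heq
    _ = 2 ^ (m.toNat) * wt ℓ1 (Finset.Icc ℓ1 m) L := by rw [wt]

/-- the inner bound -/
lemma inner_bound (m : ℤ) :
    (∑ L ∈ (Finset.Icc (1:ℤ) m).powerset,
      (((Finset.Icc (1:ℤ) m).powerset.filter (fun H => Cond L H)).card : ℝ))
      ≤ 10 * (8/3 : ℝ) ^ (m.toNat) := by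
  set M := Finset.Icc (1:ℤ) m with hM
  set f : Finset ℤ → ℝ := fun L => ((M.powerset.filter (fun H => Cond L H)).card : ℝ) with hf
  have hfnonneg : ∀ L, 0 ≤ f L := fun L => Nat.cast_nonneg _
  have hMcard : M.card = m.toNat := by
    rw [hM, Int.card_Icc]; congr 1; omega
  -- empty part
  have hempty : ∀ L ∈ M.powerset, f L ≤ (2:ℝ) ^ (m.toNat) := by
    intro L _
    have h0 : (M.powerset.filter (fun H => Cond L H)).card ≤ M.powerset.card :=
      Finset.card_le_card (Finset.filter_subset _ _)
    rw [Finset.card_powerset, hMcard] at h0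
    calc f L = (((M.powerset.filter (fun H => Cond L H)).card : ℕ) : ℝ) := rfl
      _ ≤ ((2 ^ m.toNat : ℕ) : ℝ) := Nat.cast_le.2 h0
      _ = (2:ℝ) ^ m.toNat := by push_cast; ring
  -- fibers
  set fib : ℤ → Finset (Finset ℤ) := fun ℓ1 => M.powerset.filter (fun L => L.min = (ℓ1 : WithTop ℤ))
    with hfib
  have hsplit : ∑ L ∈ M.powerset, f L =
      (∑ L ∈ M.powerset.filter (fun L => L = ∅), f L) +
      ∑ L ∈ M.powerset.filter (fun L => ¬ L = ∅), f L :=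
    (Finset.sum_filter_add_sum_filter_not _ _ _).symm
  have hempty2 : (∑ L ∈ M.powerset.filter (fun L => L = ∅), f L) ≤ (2:ℝ) ^ (m.toNat) := by
    have hsub : M.powerset.filter (fun L => L = ∅) ⊆ {∅} := by
      intro L hL
      rw [Finset.mem_filter] at hL
      rw [Finset.mem_singleton]
      exact hL.2
    calc (∑ L ∈ M.powerset.filter (fun L => L = ∅), f L)
        ≤ ∑ L ∈ ({∅} : Finset (Finset ℤ)), f L := by
          apply Finset.sum_le_sum_of_subset_of_nonneg hsub
          intro L _ _; exact hfnonneg L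
      _ = f ∅ := Finset.sum_singleton _ _
      _ ≤ (2:ℝ) ^ (m.toNat) := hempty ∅ (Finset.empty_mem_powerset _)
  -- nonempty part is inside the biUnion of fibers
  have hsubU : M.powerset.filter (fun L => ¬ L = ∅) ⊆ M.biUnion fib := by
    intro L hL
    rw [Finset.mem_filter] at hL
    obtain ⟨hLP, hLne⟩ := hL
    have hne : L.Nonempty := Finset.nonempty_iff_ne_empty.2 hLne
    rw [Finset.mem_biUnion]
    refine ⟨L.min' hne, ?_, ?_⟩
    · exact (Finset.mem_powerset.1 hLP) (L.min'_mem hne)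
    · rw [hfib, Finset.mem_filter]
      exact ⟨hLP, (Finset.coe_min' hne).symm ▸ rfl⟩
  have hdisj : ∀ x ∈ M, ∀ y ∈ M, x ≠ y → Disjoint (fib x) (fib y) := by
    intro x _ y _ hxy
    rw [Finset.disjoint_left]
    intro L hLx hLy
    rw [hfib, Finset.mem_filter] at hLx hLy
    apply hxy
    have := hLx.2.symm.trans hLy.2
    exact_mod_cast this
  have hne_bound : ∑ L ∈ M.powerset.filter (fun L => ¬ L = ∅), f L ≤
      ∑ ℓ1 ∈ M, ∑ L ∈ fib ℓ1, f L := by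
    rw [← Finset.sum_biUnion hdisj]
    apply Finset.sum_le_sum_of_subset_of_nonneg hsubU
    intro L _ _; exact hfnonneg L
  -- per fiber
  have hfiber : ∀ ℓ1 ∈ M, ∑ L ∈ fib ℓ1, f L ≤
      (2:ℝ) ^ (m.toNat) * ((9/8 : ℝ) ^ (ℓ1.toNat) * (4/3 : ℝ) ^ ((m - ℓ1 + 1).toNat)) := by
    intro ℓ1 hℓ
    have hℓ1 : 1 ≤ ℓ1 := (Finset.mem_Icc.1 hℓ).1
    have hℓm : ℓ1 ≤ m := (Finset.mem_Icc.1 hℓ).2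
    have h1 : ∀ L ∈ fib ℓ1, f L ≤ (2:ℝ) ^ (m.toNat) * wt ℓ1 (Finset.Icc ℓ1 m) L := by
      intro L hL
      rw [hfib, Finset.mem_filter] at hL
      exact fiber_elem m ℓ1 hℓ L (Finset.mem_powerset.1 hL.1) hL.2
    have h2 : ∑ L ∈ fib ℓ1, f L ≤ ∑ L ∈ fib ℓ1, (2:ℝ) ^ (m.toNat) * wt ℓ1 (Finset.Icc ℓ1 m) L :=
      Finset.sum_le_sum h1
    have hfibsub : fib ℓ1 ⊆ (Finset.Icc ℓ1 m).powerset := by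
      intro L hL
      rw [hfib, Finset.mem_filter] at hL
      rw [Finset.mem_powerset]
      intro x hx
      have hxM : x ∈ M := (Finset.mem_powerset.1 hL.1) hx
      rw [hM, Finset.mem_Icc] at hxM
      have : L.min ≤ x := Finset.min_le hx
      rw [hL.2] at this
      have : ℓ1 ≤ x := by exact_mod_cast this
      rw [Finset.mem_Icc]
      exact ⟨this, hxM.2⟩
    have h3 : ∑ L ∈ fib ℓ1, wt ℓ1 (Finset.Icc ℓ1 m) L ≤ Phi ℓ1 (Finset.Icc ℓ1 m) := by
      apply Finset.sum_le_sum_of_subset_of_nonneg hfibsub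
      intro L _ _; exact wt_nonneg _ _ _
    have h4 : Phi ℓ1 (Finset.Icc ℓ1 m) ≤ Bb ℓ1 (Finset.Icc ℓ1 m) :=
      key_bound (show (0:ℤ) < ℓ1 by omega) _
    have h5 : Bb ℓ1 (Finset.Icc ℓ1 m) ≤ (9/8 : ℝ) ^ (ℓ1.toNat) * (4/3 : ℝ) ^ ((m - ℓ1 + 1).toNat) := by
      unfold Bb
      have hcard : (Finset.Icc ℓ1 m).card = (m - ℓ1 + 1).toNat := by
        rw [Int.card_Icc]; congr 1; omega
      rw [hcard]
      apply mul_le_mul_of_nonneg_right _ (by positivity)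
      apply pow_le_pow_right₀ (by norm_num)
      -- tops ≤ ℓ1.toNat
      unfold tops
      have hsub2 : (Finset.Icc ℓ1 m).filter (fun x => x + ℓ1 ∉ Finset.Icc ℓ1 m)
          ⊆ Finset.Icc (m - ℓ1 + 1) m := by
        intro x hx
        rw [Finset.mem_filter, Finset.mem_Icc] at hx
        obtain ⟨⟨ha, hb⟩, hc⟩ := hx
        rw [Finset.mem_Icc] at hc ⊢
        push_neg at hc
        constructor
        · by_contra h
          push_neg at h
          have := hc (by omega)
          omega
        · exact hb
      have := Finset.card_le_card hsub2
      rw [Int.card_Icc] at this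
      calc ((Finset.Icc ℓ1 m).filter (fun x => x + ℓ1 ∉ Finset.Icc ℓ1 m)).card
          ≤ (m + 1 - (m - ℓ1 + 1)).toNat := this
        _ ≤ ℓ1.toNat := by omega
    calc ∑ L ∈ fib ℓ1, f L ≤ ∑ L ∈ fib ℓ1, (2:ℝ) ^ (m.toNat) * wt ℓ1 (Finset.Icc ℓ1 m) L := h2
      _ = (2:ℝ) ^ (m.toNat) * ∑ L ∈ fib ℓ1, wt ℓ1 (Finset.Icc ℓ1 m) L := by
          rw [Finset.mul_sum]
      _ ≤ (2:ℝ) ^ (m.toNat) * Bb ℓ1 (Finset.Icc ℓ1 m) := by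
          apply mul_le_mul_of_nonneg_left _ (by positivity)
          exact le_trans h3 h4
      _ ≤ (2:ℝ) ^ (m.toNat) * ((9/8 : ℝ) ^ (ℓ1.toNat) * (4/3 : ℝ) ^ ((m - ℓ1 + 1).toNat)) := by
          apply mul_le_mul_of_nonneg_left h5 (by positivity)
  -- sum the geometric series over ℓ1
  have hgeom : ∑ ℓ1 ∈ M, ((9/8 : ℝ) ^ (ℓ1.toNat) * (4/3 : ℝ) ^ ((m - ℓ1 + 1).toNat))
      ≤ (32/5 : ℝ) * (4/3 : ℝ) ^ (m.toNat + 1) := by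
    have hterm : ∀ ℓ1 ∈ M, (9/8 : ℝ) ^ (ℓ1.toNat) * (4/3 : ℝ) ^ ((m - ℓ1 + 1).toNat)
        = (4/3 : ℝ) ^ (m.toNat + 1) * (27/32 : ℝ) ^ (ℓ1.toNat) := by
      intro ℓ1 hℓ
      rw [hM, Finset.mem_Icc] at hℓ
      have hexp : (m - ℓ1 + 1).toNat + ℓ1.toNat = m.toNat + 1 := by omega
      have h43 : (4/3 : ℝ) ^ (m.toNat + 1) = (4/3 : ℝ) ^ ((m - ℓ1 + 1).toNat) * (4/3 : ℝ) ^ (ℓ1.toNat) := by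
        rw [← pow_add, hexp]
      have h98 : (27/32 : ℝ) ^ (ℓ1.toNat) * (4/3 : ℝ) ^ (ℓ1.toNat) = (9/8 : ℝ) ^ (ℓ1.toNat) := by
        rw [← mul_pow]; norm_num
      rw [h43, ← h98]
      ring

    rw [Finset.sum_congr rfl hterm]
    rw [← Finset.mul_sum]
    rw [mul_comm ((32:ℝ)/5) _]
    apply mul_le_mul_of_nonneg_left _ (by positivity)
    have := sum_pow_le (r := (27/32 : ℝ)) (by norm_num) (by norm_num) 1 m
      (fun ℓ1 => ℓ1.toNat) (m.toNat)
      (by intro s hs t ht h; rw [Finset.mem_Icc] at hs ht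
          change s.toNat = t.toNat at h; omega)
      (by intro s hs; rw [Finset.mem_Icc] at hs
          change s.toNat ≤ m.toNat; omega)
    calc ∑ ℓ1 ∈ M, (27/32 : ℝ) ^ (ℓ1.toNat) ≤ 1 / (1 - 27/32) := this
      _ = 32/5 := by norm_num
  -- put together
  rw [hsplit]
  have htotal : ∑ ℓ1 ∈ M, ∑ L ∈ fib ℓ1, f L ≤
      (2:ℝ) ^ (m.toNat) * ((32/5 : ℝ) * (4/3 : ℝ) ^ (m.toNat + 1)) := by
    calc ∑ ℓ1 ∈ M, ∑ L ∈ fib ℓ1, f L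
        ≤ ∑ ℓ1 ∈ M, (2:ℝ) ^ (m.toNat) * ((9/8 : ℝ) ^ (ℓ1.toNat) * (4/3 : ℝ) ^ ((m - ℓ1 + 1).toNat)) :=
          Finset.sum_le_sum hfiber
      _ = (2:ℝ) ^ (m.toNat) * ∑ ℓ1 ∈ M, ((9/8 : ℝ) ^ (ℓ1.toNat) * (4/3 : ℝ) ^ ((m - ℓ1 + 1).toNat)) := by
          rw [Finset.mul_sum]
      _ ≤ (2:ℝ) ^ (m.toNat) * ((32/5 : ℝ) * (4/3 : ℝ) ^ (m.toNat + 1)) := by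
          apply mul_le_mul_of_nonneg_left hgeom (by positivity)
  have hfinal : (2:ℝ) ^ (m.toNat) + (2:ℝ) ^ (m.toNat) * ((32/5 : ℝ) * (4/3 : ℝ) ^ (m.toNat + 1))
      ≤ 10 * (8/3 : ℝ) ^ (m.toNat) := by
    have h83 : (8/3 : ℝ) ^ (m.toNat) = (2:ℝ) ^ (m.toNat) * (4/3 : ℝ) ^ (m.toNat) := by
      rw [← mul_pow]; norm_num
    have h1 : (1:ℝ) ≤ (4/3 : ℝ) ^ (m.toNat) := one_le_pow₀ (by norm_num)
    have h2 : (0:ℝ) < (2:ℝ) ^ (m.toNat) := by positivity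
    rw [h83, pow_succ]
    nlinarith [h1, h2]
  linarith [le_trans hne_bound htotal, hempty2]


section Outer

variable (n : ℕ)

/-- the collection of sets we are counting -/
noncomputable def SF : Finset (Finset ℤ) :=
  (Finset.Icc (1 : ℤ) n).powerset.filter
    (fun S => (∀ x ∈ S, ∀ y ∈ S, x + y ∉ S) ∧ ∀ s ∈ S, (n : ℤ) < 3 * s)

noncomputable def S1 (s1 : ℤ) : Finset (Finset ℤ) :=
  (SF n).filter (fun S => S.min = (s1 : WithTop ℤ))

lemma S1_mem {s1 : ℤ} {S : Finset ℤ} (hS : S ∈ S1 n s1) :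
    S ⊆ Finset.Icc (1:ℤ) n ∧ (∀ x ∈ S, ∀ y ∈ S, x + y ∉ S) ∧ (∀ s ∈ S, (n : ℤ) < 3 * s)
      ∧ s1 ∈ S ∧ (∀ x ∈ S, s1 ≤ x) := by
  rw [S1, Finset.mem_filter, SF, Finset.mem_filter, Finset.mem_powerset] at hS
  obtain ⟨⟨hsub, hsf, h3s⟩, hmin⟩ := hS
  refine ⟨hsub, hsf, h3s, Finset.mem_of_min hmin, ?_⟩
  intro x hx
  have := Finset.min_le hx
  rw [hmin] at this
  exact_mod_cast this

/-- easy branch -/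
lemma easy_bound (s1 : ℤ) : (S1 n s1).card ≤ 2 ^ (((n:ℤ) - s1).toNat) := by
  have hinj : Set.InjOn (fun S : Finset ℤ => S.erase s1) ((S1 n s1) : Set (Finset ℤ)) := by
    intro S hS T hT h
    have hS' := S1_mem n hS
    have hT' := S1_mem n hT
    have h0 : S.erase s1 = T.erase s1 := h
    have h1 : insert s1 (S.erase s1) = insert s1 (T.erase s1) := by rw [h0]
    rwa [Finset.insert_erase hS'.2.2.2.1, Finset.insert_erase hT'.2.2.2.1] at h1
  have hmaps : ∀ S ∈ S1 n s1, S.erase s1 ∈ (Finset.Icc (s1+1) (n:ℤ)).powerset := by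
    intro S hS
    obtain ⟨hsub, _, _, hs1S, hlow⟩ := S1_mem n hS
    rw [Finset.mem_powerset]
    intro x hx
    rw [Finset.mem_erase] at hx
    have h1 := hlow x hx.2
    have h2 := hsub hx.2
    rw [Finset.mem_Icc] at h2 ⊢
    have := hx.1
    omega
  have := Finset.card_le_card_of_injOn _ hmaps hinj
  calc (S1 n s1).card ≤ (Finset.Icc (s1+1) (n:ℤ)).powerset.card := this
    _ = 2 ^ (((n:ℤ) - s1).toNat) := by
        rw [Finset.card_powerset, Int.card_Icc]
        congr 1
        omega

/-- hard branch -/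
lemma hard_bound (s1 : ℤ) (hs1 : 1 ≤ s1) (h2 : 2*s1 ≤ (n:ℤ)) :
    ((S1 n s1).card : ℝ) ≤
      10 * (8/3 : ℝ) ^ (((n:ℤ) - 2*s1).toNat) * 2 ^ ((3*s1 - (n:ℤ)).toNat) := by
  rcases Finset.eq_empty_or_nonempty (S1 n s1) with hemp | ⟨S₀, hS₀⟩
  · rw [hemp]
    simp only [Finset.card_empty, Nat.cast_zero]
    positivity
  obtain ⟨_, _, h3s₀, hs1S₀, _⟩ := S1_mem n hS₀
  have h3 : (n:ℤ) < 3*s1 := h3s₀ s1 hs1S₀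
  set m : ℤ := (n:ℤ) - 2*s1 with hm
  set M : Finset ℤ := Finset.Icc (1:ℤ) m with hM
  set U : Finset ℤ := Finset.Icc ((n:ℤ) - s1 + 1) (2*s1) with hU
  set target := (M.powerset.sigma (fun L => M.powerset.filter (fun H => Cond L H)))
      ×ˢ U.powerset with htarget
  set encL : Finset ℤ → Finset ℤ :=
    fun S => (S ∩ Finset.Icc (s1+1) ((n:ℤ)-s1)).image (fun x => x - s1) with hencL
  set encH : Finset ℤ → Finset ℤ :=
    fun S => (S ∩ Finset.Icc (2*s1+1) (n:ℤ)).image (fun x => x - 2*s1) with hencH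
  set enc : Finset ℤ → (Σ _ : Finset ℤ, Finset ℤ) × Finset ℤ :=
    fun S => (⟨encL S, encH S⟩, S ∩ U) with henc
  -- characterizations
  have charL : ∀ S : Finset ℤ, ∀ j : ℤ, j ∈ encL S ↔ (j + s1 ∈ S ∧ 1 ≤ j ∧ j ≤ m) := by
    intro S j
    rw [hencL]
    simp only [Finset.mem_image, Finset.mem_inter, Finset.mem_Icc]
    constructor
    · rintro ⟨x, ⟨hxS, hx1, hx2⟩, rfl⟩
      refine ⟨by simpa using hxS, by omega, by omega⟩
    · rintro ⟨hjS, hj1, hj2⟩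
      exact ⟨j + s1, ⟨hjS, by omega, by omega⟩, by ring⟩
  have charH : ∀ S : Finset ℤ, ∀ j : ℤ, j ∈ encH S ↔ (j + 2*s1 ∈ S ∧ 1 ≤ j ∧ j ≤ m) := by
    intro S j
    rw [hencH]
    simp only [Finset.mem_image, Finset.mem_inter, Finset.mem_Icc]
    constructor
    · rintro ⟨x, ⟨hxS, hx1, hx2⟩, rfl⟩
      refine ⟨by simpa using hxS, by omega, by omega⟩
    · rintro ⟨hjS, hj1, hj2⟩
      exact ⟨j + 2*s1, ⟨hjS, by omega, by omega⟩, by ring⟩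
  -- membership in the target
  have hmaps : ∀ S ∈ S1 n s1, enc S ∈ target := by
    intro S hS
    obtain ⟨hsub, hsf, h3s, hs1S, hlow⟩ := S1_mem n hS
    rw [htarget, Finset.mem_product]
    constructor
    · rw [Finset.mem_sigma]
      refine ⟨?_, ?_⟩
      · rw [Finset.mem_powerset]
        intro j hj
        rw [charL S j] at hj
        rw [hM, Finset.mem_Icc]
        omega
      · rw [Finset.mem_filter, Finset.mem_powerset]
        refine ⟨?_, ?_, ?_⟩
        · intro j hj
          rw [charH S j] at hj
          rw [hM, Finset.mem_Icc]
          omega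
        · intro j hjH hjL
          rw [charH S j] at hjH
          rw [charL S j] at hjL
          have := hsf s1 hs1S (j + s1) hjL.1
          apply this
          have heq : s1 + (j + s1) = j + 2*s1 := by ring
          rw [heq]
          exact hjH.1
        · intro i hi i' hi' hii'
          rw [charL S i] at hi
          rw [charL S i'] at hi'
          rw [charH S (i+i')] at hii'
          have := hsf (i + s1) hi.1 (i' + s1) hi'.1
          apply this
          have heq : i + s1 + (i' + s1) = i + i' + 2*s1 := by ring
          rw [heq]
          exact hii'.1
    · rw [Finset.mem_powerset]
      exact Finset.inter_subset_right
  -- decomposition lemma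
  have hdecomp : ∀ S ∈ S1 n s1, ∀ x : ℤ,
      x ∈ S ↔ (x = s1 ∨ x - s1 ∈ encL S ∨ x ∈ S ∩ U ∨ x - 2*s1 ∈ encH S) := by
    intro S hS x
    obtain ⟨hsub, hsf, h3s, hs1S, hlow⟩ := S1_mem n hS
    constructor
    · intro hx
      have hx1 : s1 ≤ x := hlow x hx
      have hx2 : x ≤ n := (Finset.mem_Icc.1 (hsub hx)).2
      by_cases hc1 : x = s1
      · exact Or.inl hc1
      by_cases hc2 : x ≤ (n:ℤ) - s1
      · refine Or.inr (Or.inl ?_)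
        rw [charL S (x - s1)]
        have : x - s1 + s1 = x := by ring
        rw [this]
        refine ⟨hx, by omega, by omega⟩
      by_cases hc3 : x ≤ 2*s1
      · refine Or.inr (Or.inr (Or.inl ?_))
        rw [Finset.mem_inter, hU, Finset.mem_Icc]
        exact ⟨hx, by omega, by omega⟩
      · refine Or.inr (Or.inr (Or.inr ?_))
        rw [charH S (x - 2*s1)]
        have : x - 2*s1 + 2*s1 = x := by ring
        rw [this]
        refine ⟨hx, by omega, by omega⟩
    · rintro (rfl | hL | hM2 | hH)
      · exact hs1S
      · rw [charL S (x - s1)] at hL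
        have h1 := hL.1
        have h2 : x - s1 + s1 = x := by ring
        rwa [h2] at h1
      · exact (Finset.mem_inter.1 hM2).1
      · rw [charH S (x - 2*s1)] at hH
        have h1 := hH.1
        have h2 : x - 2*s1 + 2*s1 = x := by ring
        rwa [h2] at h1
  -- injectivity
  have hinj : Set.InjOn enc (S1 n s1) := by
    intro S hS T hT h
    have hLeq : encL S = encL T := congrArg (fun p => p.1.1) h
    have hHeq : encH S = encH T := congrArg (fun p => p.1.2) h
    have hUeq : S ∩ U = T ∩ U := congrArg Prod.snd h
    ext x
    rw [hdecomp S hS x, hdecomp T hT x, hLeq, hHeq, hUeq]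
  have hcard1 := Finset.card_le_card_of_injOn enc hmaps hinj
  -- compute the cardinal of the target
  have hcardU : U.card = (3*s1 - (n:ℤ)).toNat := by
    rw [hU, Int.card_Icc]
    congr 1
    omega
  have hcardtarget : (target.card : ℝ) =
      (∑ L ∈ M.powerset, ((M.powerset.filter (fun H => Cond L H)).card : ℝ))
        * 2 ^ ((3*s1 - (n:ℤ)).toNat) := by
    rw [htarget, Finset.card_product, Finset.card_sigma, Finset.card_powerset, hcardU]
    push_cast
    ring
  have hsum : (∑ L ∈ M.powerset, ((M.powerset.filter (fun H => Cond L H)).card : ℝ))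
      ≤ 10 * (8/3 : ℝ) ^ (m.toNat) := inner_bound m
  calc ((S1 n s1).card : ℝ) ≤ (target.card : ℝ) := by exact_mod_cast hcard1
    _ = (∑ L ∈ M.powerset, ((M.powerset.filter (fun H => Cond L H)).card : ℝ))
        * 2 ^ ((3*s1 - (n:ℤ)).toNat) := hcardtarget
    _ ≤ 10 * (8/3 : ℝ) ^ (m.toNat) * 2 ^ ((3*s1 - (n:ℤ)).toNat) := by
        apply mul_le_mul_of_nonneg_right hsum (by positivity)
    _ = 10 * (8/3 : ℝ) ^ (((n:ℤ) - 2*s1).toNat) * 2 ^ ((3*s1 - (n:ℤ)).toNat) := by rw [hm]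

lemma le_of_sq_le_sq {x y : ℝ} (hx : 0 ≤ x) (hy : 0 ≤ y) (h : x^2 ≤ y^2) : x ≤ y := by
  have := Real.sqrt_le_sqrt h
  rwa [Real.sqrt_sq hx, Real.sqrt_sq hy] at this

lemma arith1 (n : ℕ) (e1 e2 k : ℕ) (hsum : 3*e1 + 2*e2 = n) (hk : 2*k ≤ e1) :
    (8/3:ℝ)^e1 * 2^e2 ≤ (2:ℝ) ^ ((n:ℝ)/2) * (8/9)^k := by
  have hE0 : (0:ℝ) < (2:ℝ) ^ ((n:ℝ)/2) := Real.rpow_pos_of_pos (by norm_num) _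
  have hE2 : ((2:ℝ) ^ ((n:ℝ)/2))^2 = (2:ℝ)^(n:ℕ) := by
    rw [← Real.rpow_natCast 2 n, sq, ← Real.rpow_add (by norm_num)]
    congr 1
    ring
  apply le_of_sq_le_sq (by positivity) (by positivity)
  have step1 : ((8/3:ℝ)^e1 * 2^e2)^2 = (64/9:ℝ)^e1 * (4:ℝ)^e2 := by
    rw [mul_pow, ← pow_mul, ← pow_mul, mul_comm e1 2, mul_comm e2 2, pow_mul, pow_mul]
    norm_num
  have step2 : (64/9:ℝ)^e1 = (2:ℝ)^(3*e1) * (8/9)^e1 := by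
    rw [pow_mul, ← mul_pow]
    norm_num
  have step3 : (4:ℝ)^e2 = (2:ℝ)^(2*e2) := by
    rw [pow_mul]
    norm_num
  have step4 : ((8/3:ℝ)^e1 * 2^e2)^2 = (2:ℝ)^(n:ℕ) * (8/9)^e1 := by
    rw [step1, step2, step3, ← hsum]
    rw [pow_add]
    ring
  have step5 : ((2:ℝ) ^ ((n:ℝ)/2) * (8/9)^k)^2 = (2:ℝ)^(n:ℕ) * (8/9)^(2*k) := by
    rw [mul_pow, hE2, ← pow_mul, mul_comm k 2]
  rw [step4, step5]
  apply mul_le_mul_of_nonneg_left _ (by positivity)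
  exact pow_le_pow_of_le_one (by norm_num) (by norm_num) hk

lemma arith2 (n cN j k : ℕ) (hjk : j + k = cN) (hc : 2*cN ≤ n) :
    (2:ℝ)^j ≤ (2:ℝ) ^ ((n:ℝ)/2) * (1/2)^k := by
  have hsplit : (2:ℝ)^j = (2:ℝ)^cN * (1/2)^k := by
    rw [← hjk, pow_add, mul_assoc, ← mul_pow]
    norm_num
  have h2 : (2:ℝ)^cN ≤ (2:ℝ)^((n:ℝ)/2) := by
    rw [← Real.rpow_natCast 2 cN]
    apply Real.rpow_le_rpow_of_exponent_le (by norm_num)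
    have : 2*(cN:ℝ) ≤ (n:ℝ) := by exact_mod_cast hc
    linarith
  rw [hsplit]
  apply mul_le_mul_of_nonneg_right h2 (by positivity)

lemma final (n : ℕ) (hn : 0 < n) : ((SF n).card : ℝ) ≤ 1000 * (2:ℝ) ^ ((n:ℝ)/2) := by
  set b : ℤ := ((n / 2 : ℕ) : ℤ) with hb
  have hb0 : 0 ≤ b := by rw [hb]; exact_mod_cast Nat.zero_le _
  have h2b : 2 * b ≤ (n:ℤ) := by
    rw [hb]
    have : 2 * (n / 2) ≤ n := by omega
    exact_mod_cast this
  have hbn : b ≤ (n:ℤ) := by omega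
  set E := (2:ℝ)^((n:ℝ)/2) with hE
  have hE1 : (1:ℝ) ≤ E := by
    rw [hE]
    have : (2:ℝ) ^ (0:ℝ) ≤ (2:ℝ)^((n:ℝ)/2) := by
      apply Real.rpow_le_rpow_of_exponent_le (by norm_num)
      positivity
    rwa [Real.rpow_zero] at this
  -- covering
  have hcover : SF n ⊆ insert ∅ ((Finset.Icc (1:ℤ) (n:ℤ)).biUnion (fun s1 => S1 n s1)) := by
    intro S hS
    rcases Finset.eq_empty_or_nonempty S with rfl | hne
    · exact Finset.mem_insert_self _ _
    · apply Finset.mem_insert_of_mem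
      rw [Finset.mem_biUnion]
      refine ⟨S.min' hne, ?_, ?_⟩
      · have h1 : S.min' hne ∈ S := S.min'_mem hne
        have h2 : S ⊆ Finset.Icc (1:ℤ) n := by
          rw [SF, Finset.mem_filter, Finset.mem_powerset] at hS
          exact hS.1
        exact h2 h1
      · rw [S1, Finset.mem_filter]
        exact ⟨hS, (Finset.coe_min' hne).symm ▸ rfl⟩
  have hcard1 : ((SF n).card : ℝ) ≤ 1 + ∑ s1 ∈ Finset.Icc (1:ℤ) (n:ℤ), ((S1 n s1).card : ℝ) := by
    have h1 : (SF n).card ≤ 1 + ∑ s1 ∈ Finset.Icc (1:ℤ) (n:ℤ), (S1 n s1).card := by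
      calc (SF n).card ≤ (insert ∅ ((Finset.Icc (1:ℤ) (n:ℤ)).biUnion (fun s1 => S1 n s1))).card :=
            Finset.card_le_card hcover
        _ ≤ ((Finset.Icc (1:ℤ) (n:ℤ)).biUnion (fun s1 => S1 n s1)).card + 1 :=
            Finset.card_insert_le _ _
        _ ≤ (∑ s1 ∈ Finset.Icc (1:ℤ) (n:ℤ), (S1 n s1).card) + 1 := by
            have hbi : ((Finset.Icc (1:ℤ) (n:ℤ)).biUnion (fun s1 => S1 n s1)).card ≤
                ∑ s1 ∈ Finset.Icc (1:ℤ) (n:ℤ), (S1 n s1).card :=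
              Finset.card_biUnion_le
            exact Nat.add_le_add_right hbi 1
        _ = 1 + ∑ s1 ∈ Finset.Icc (1:ℤ) (n:ℤ), (S1 n s1).card := by omega
    calc ((SF n).card : ℝ)
        ≤ ((1 + ∑ s1 ∈ Finset.Icc (1:ℤ) (n:ℤ), (S1 n s1).card : ℕ) : ℝ) := by
          exact_mod_cast h1
      _ = 1 + ∑ s1 ∈ Finset.Icc (1:ℤ) (n:ℤ), ((S1 n s1).card : ℝ) := by
          push_cast
          ring
  -- split the interval
  have hIcc1 : Finset.Icc (1:ℤ) b = Finset.Ioc (0:ℤ) b := by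
    ext x; rw [Finset.mem_Icc, Finset.mem_Ioc]; omega
  have hIcc2 : Finset.Icc (b+1) (n:ℤ) = Finset.Ioc b (n:ℤ) := by
    ext x; rw [Finset.mem_Icc, Finset.mem_Ioc]; omega
  have hIcc3 : Finset.Icc (1:ℤ) (n:ℤ) = Finset.Ioc (0:ℤ) (n:ℤ) := by
    ext x; rw [Finset.mem_Icc, Finset.mem_Ioc]; omega
  have hsplitI : ∑ s1 ∈ Finset.Icc (1:ℤ) (n:ℤ), ((S1 n s1).card : ℝ) =
      (∑ s1 ∈ Finset.Icc (1:ℤ) b, ((S1 n s1).card : ℝ)) +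
      ∑ s1 ∈ Finset.Icc (b+1) (n:ℤ), ((S1 n s1).card : ℝ) := by
    rw [hIcc1, hIcc2, hIcc3]
    have hdisj : Disjoint (Finset.Ioc (0:ℤ) b) (Finset.Ioc b (n:ℤ)) := by
      rw [Finset.disjoint_left]
      intro x hx hx'
      rw [Finset.mem_Ioc] at hx hx'
      omega
    rw [← Finset.Ioc_union_Ioc_eq_Ioc hb0 hbn, Finset.sum_union hdisj]
  -- hard branch
  have hhard : ∀ s1 ∈ Finset.Icc (1:ℤ) b, ((S1 n s1).card : ℝ) ≤
      10 * E * (8/9 : ℝ)^((b - s1).toNat) := by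
    intro s1 hs
    rw [Finset.mem_Icc] at hs
    by_cases h3 : (n:ℤ) < 3 * s1
    · have hb1 := hard_bound n s1 hs.1 (by omega)
      have ha := arith1 n (((n:ℤ) - 2*s1).toNat) ((3*s1 - (n:ℤ)).toNat) ((b - s1).toNat)
        (by omega) (by omega)
      calc ((S1 n s1).card : ℝ)
          ≤ 10 * (8/3 : ℝ) ^ (((n:ℤ) - 2*s1).toNat) * 2 ^ ((3*s1 - (n:ℤ)).toNat) := hb1
        _ = 10 * ((8/3 : ℝ) ^ (((n:ℤ) - 2*s1).toNat) * 2 ^ ((3*s1 - (n:ℤ)).toNat)) := by ring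
        _ ≤ 10 * (E * (8/9 : ℝ)^((b - s1).toNat)) := by
            apply mul_le_mul_of_nonneg_left _ (by norm_num)
            exact ha
        _ = 10 * E * (8/9 : ℝ)^((b - s1).toNat) := by ring
    · have hemp : S1 n s1 = ∅ := by
        apply Finset.eq_empty_of_forall_notMem
        intro S hS
        obtain ⟨_, _, h3s, hmem, _⟩ := S1_mem n hS
        exact h3 (h3s s1 hmem)
      rw [hemp]
      simp only [Finset.card_empty, Nat.cast_zero]
      positivity
  have hsum1 : ∑ s1 ∈ Finset.Icc (1:ℤ) b, ((S1 n s1).card : ℝ) ≤ 90 * E := by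
    have hgeo := sum_pow_le (r := (8/9 : ℝ)) (by norm_num) (by norm_num) 1 b
      (fun s1 => (b - s1).toNat) ((b-1).toNat)
      (by intro s hs t ht h
          rw [Finset.mem_Icc] at hs ht
          change (b - s).toNat = (b - t).toNat at h
          omega)
      (by intro s hs
          rw [Finset.mem_Icc] at hs
          change (b - s).toNat ≤ (b-1).toNat
          omega)
    calc ∑ s1 ∈ Finset.Icc (1:ℤ) b, ((S1 n s1).card : ℝ)
        ≤ ∑ s1 ∈ Finset.Icc (1:ℤ) b, 10 * E * (8/9 : ℝ)^((b - s1).toNat) :=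
          Finset.sum_le_sum hhard
      _ = 10 * E * ∑ s1 ∈ Finset.Icc (1:ℤ) b, (8/9 : ℝ)^((b - s1).toNat) := by
          rw [Finset.mul_sum]
      _ ≤ 10 * E * (1 / (1 - 8/9)) := by
          apply mul_le_mul_of_nonneg_left hgeo (by positivity)
      _ = 90 * E := by
          rw [show (1:ℝ) / (1 - 8/9) = 9 by norm_num]
          ring
  -- easy branch
  have heasy : ∀ s1 ∈ Finset.Icc (b+1) (n:ℤ), ((S1 n s1).card : ℝ) ≤
      E * (1/2 : ℝ)^((s1 - (b+1)).toNat) := by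
    intro s1 hs
    rw [Finset.mem_Icc] at hs
    have he := easy_bound n s1
    have hcast : ((S1 n s1).card : ℝ) ≤ (2:ℝ) ^ (((n:ℤ) - s1).toNat) := by
      calc ((S1 n s1).card : ℝ) ≤ ((2 ^ (((n:ℤ) - s1).toNat) : ℕ) : ℝ) := by
            exact_mod_cast he
        _ = (2:ℝ) ^ (((n:ℤ) - s1).toNat) := by push_cast; ring
    have ha := arith2 n (n - n/2 - 1) (((n:ℤ) - s1).toNat) ((s1 - (b+1)).toNat)
      (by omega) (by omega)
    exact le_trans hcast ha
  have hsum2 : ∑ s1 ∈ Finset.Icc (b+1) (n:ℤ), ((S1 n s1).card : ℝ) ≤ 2 * E := by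
    have hgeo := sum_pow_le (r := (1/2 : ℝ)) (by norm_num) (by norm_num) (b+1) (n:ℤ)
      (fun s1 => (s1 - (b+1)).toNat) (((n:ℤ) - (b+1)).toNat)
      (by intro s hs t ht h
          rw [Finset.mem_Icc] at hs ht
          change (s - (b+1)).toNat = (t - (b+1)).toNat at h
          omega)
      (by intro s hs
          rw [Finset.mem_Icc] at hs
          change (s - (b+1)).toNat ≤ ((n:ℤ) - (b+1)).toNat
          omega)
    calc ∑ s1 ∈ Finset.Icc (b+1) (n:ℤ), ((S1 n s1).card : ℝ)
        ≤ ∑ s1 ∈ Finset.Icc (b+1) (n:ℤ), E * (1/2 : ℝ)^((s1 - (b+1)).toNat) :=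
          Finset.sum_le_sum heasy
      _ = E * ∑ s1 ∈ Finset.Icc (b+1) (n:ℤ), (1/2 : ℝ)^((s1 - (b+1)).toNat) := by
          rw [Finset.mul_sum]
      _ ≤ E * (1 / (1 - 1/2)) := by
          apply mul_le_mul_of_nonneg_left hgeo (by positivity)
      _ = 2 * E := by
          rw [show (1:ℝ) / (1 - 1/2) = 2 by norm_num]
          ring
  calc ((SF n).card : ℝ) ≤ 1 + ∑ s1 ∈ Finset.Icc (1:ℤ) (n:ℤ), ((S1 n s1).card : ℝ) := hcard1
    _ = 1 + ((∑ s1 ∈ Finset.Icc (1:ℤ) b, ((S1 n s1).card : ℝ)) +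
        ∑ s1 ∈ Finset.Icc (b+1) (n:ℤ), ((S1 n s1).card : ℝ)) := by rw [hsplitI]
    _ ≤ 1 + (90 * E + 2 * E) := by linarith [hsum1, hsum2]
    _ ≤ 1000 * E := by linarith [hE1]

end Outer
end CE5

/-- Cameron–Erdős: there is an absolute constant `c > 0` such that the number of
sum-free subsets of `[1, n]` whose every element `s` satisfies `3s > n` is at most
`c · 2^{n/2}`. -/
theorem stmt_5 :
    ∃ c : ℝ, 0 < c ∧ ∀ n : ℕ, 0 < n →
      (((Finset.Icc (1 : ℤ) n).powerset.filter
          (fun S => (∀ x ∈ S, ∀ y ∈ S, x + y ∉ S) ∧ ∀ s ∈ S, (n : ℤ) < 3 * s)).card : ℝ)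
        ≤ c * 2 ^ ((n : ℝ) / 2) := by
  refine ⟨1000, by norm_num, ?_⟩
  intro n hn
  have h := CE5.final n hn
  convert h using 4
  ext S; simp [CE5.SF]
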